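/- Let f: [0,∞) → ℝ be monotone increasing with f(0) = 0. For any ε ∈ (0,1), consider the two-point metric space X = {x₁, x₂} with d(x₁,x₂) = √(2/((1−ε)·ε))·f(ε), the probability measure μ = δ_{x₁}, and the perturbed measure μ' with μ'(x₁) = 1−ε, μ'(x₂) = ε. Then the total variation distance between μ and μ' is at most ε, and the 2-Gromov-Wasserstein distance from (X, d, μ') to the one-point metric measure space equals (1/2)·√((1−ε)ε)·√2·d(x₁,x₂) = f(ε), while the 2-GW distance from (X, d, μ) to the one-point space is 0. -/
import Mathlib


open MeasureTheory

theorem gw_not_robust (f : ℝ → ℝ) (hmono : MonotoneOn f (Set.Ici 0))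
    (hf0 : f 0 = 0) (ε : ℝ) (hε : ε ∈ Set.Ioo (0 : ℝ) 1)
    (D : ℝ) (hD : D = Real.sqrt (2 / ((1 - ε) * ε)) * f ε)
    (d : Bool → Bool → ℝ) (hd : ∀ x y, d x y = if x = y then 0 else D)
    (μ μ' : Measure Bool) (hμ : μ = Measure.dirac false)
    (hμ' : μ' = ENNReal.ofReal (1 - ε) • Measure.dirac false
        + ENNReal.ofReal ε • Measure.dirac true) :
    (∀ A : Set Bool, |(μ A).toReal - (μ' A).toReal| ≤ ε) ∧
    (1 / 2) * Real.sqrt (∫ x, ∫ x', (d x x') ^ 2 ∂μ' ∂μ') = f ε ∧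
    (1 / 2) * Real.sqrt ((1 - ε) * ε) * Real.sqrt 2 * d false true = f ε ∧
    (1 / 2) * Real.sqrt (∫ x, ∫ x', (d x x') ^ 2 ∂μ ∂μ) = 0 := by
  classical
  obtain ⟨hε0, hε1⟩ := hε
  have hε1' : (0:ℝ) ≤ 1 - ε := by linarith
  have hfε : 0 ≤ f ε := by
    have := hmono (Set.mem_Ici.mpr le_rfl) (Set.mem_Ici.mpr hε0.le) hε0.le
    simpa [hf0] using this
  have hD0 : 0 ≤ D := by
    rw [hD]; exact mul_nonneg (Real.sqrt_nonneg _) hfε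
  have hprod : 0 < (1 - ε) * ε := mul_pos (by linarith) hε0
  have hfin1 : IsFiniteMeasure ((ENNReal.ofReal (1 - ε)) • (Measure.dirac false : Measure Bool)) := by
    constructor
    simp [ENNReal.ofReal_lt_top, ENNReal.mul_lt_top]
  have hfin2 : IsFiniteMeasure ((ENNReal.ofReal ε) • (Measure.dirac true : Measure Bool)) := by
    constructor
    simp [ENNReal.ofReal_lt_top, ENNReal.mul_lt_top]
  have key : ∀ g : Bool → ℝ, ∫ x, g x ∂μ' = (1 - ε) * g false + ε * g true := by
    intro g
    rw [hμ', integral_add_measure (Integrable.of_finite) (Integrable.of_finite),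
      integral_smul_measure, integral_smul_measure, integral_dirac, integral_dirac,
      ENNReal.toReal_ofReal hε1', ENNReal.toReal_ofReal hε0.le]
    simp [smul_eq_mul]
  have hdff : d false false = 0 := by simp [hd]
  have hdtt : d true true = 0 := by simp [hd]
  have hdft : d false true = D := by simp [hd]
  have hdtf : d true false = D := by simp [hd]
  have hinner : ∫ x, ∫ x', (d x x') ^ 2 ∂μ' ∂μ' = 2 * ((1 - ε) * ε) * D ^ 2 := by
    rw [key]
    rw [key fun x' => (d false x') ^ 2, key fun x' => (d true x') ^ 2]
    rw [hdff, hdtt, hdft, hdtf]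
    ring
  have hsq : Real.sqrt (2 * ((1 - ε) * ε) * D ^ 2) = Real.sqrt 2 * Real.sqrt ((1 - ε) * ε) * D := by
    rw [Real.sqrt_mul (by positivity), Real.sqrt_mul (by norm_num),
      Real.sqrt_sq hD0]
  have hs : Real.sqrt ((1 - ε) * ε) * Real.sqrt (2 / ((1 - ε) * ε)) = Real.sqrt 2 := by
    rw [← Real.sqrt_mul hprod.le, mul_div_cancel₀ _ hprod.ne']
  have h2 : Real.sqrt 2 * Real.sqrt 2 = 2 := Real.mul_self_sqrt (by norm_num)
  have hDval : Real.sqrt 2 * Real.sqrt ((1 - ε) * ε) * D = 2 * f ε := by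
    rw [hD]
    linear_combination Real.sqrt 2 * f ε * hs + f ε * h2
  refine ⟨?_, ?_, ?_, ?_⟩
  · intro A
    have hμA : (μ A).toReal = if false ∈ A then 1 else 0 := by
      rw [hμ, Measure.dirac_apply]
      by_cases h : false ∈ A <;> simp [h]
    have hμ'A : (μ' A).toReal = (if false ∈ A then 1 - ε else 0) + (if true ∈ A then ε else 0) := by
      rw [hμ']
      simp only [Measure.coe_add, Measure.coe_smul, Pi.add_apply, Pi.smul_apply,
        Measure.dirac_apply, smul_eq_mul]
      by_cases h1 : false ∈ A <;> by_cases h2 : true ∈ A <;>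
        simp [h1, h2, ENNReal.toReal_add, ENNReal.toReal_ofReal, hε0.le, hε1']
    rw [hμA, hμ'A, abs_le]
    constructor <;> split_ifs <;> linarith
  · rw [hinner, hsq, hDval]; ring
  · rw [hdft, hD]
    linear_combination (1/2) * Real.sqrt 2 * f ε * hs + (1/2) * f ε * h2
  · rw [hμ]
    rw [integral_dirac, integral_dirac, hdff]
    norm_num
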